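/- The transcendent p-adic upper half plane Ω_tr, with the subspace topology inherited from ℂ_p, is a Polish space, i.e., it is separable and completely metrizable. -/

import Mathlib

open Polynomial Metric Set Topology


lemma aux_multiset_pow_le {s : Multiset ℝ} {m : ℝ} (hm : 0 ≤ m) (h : ∀ a ∈ s, m ≤ a) :
    m ^ Multiset.card s ≤ s.prod := by
  induction s using Multiset.induction with
  | empty => simp
  | cons a t ih =>
    have hma := h a (Multiset.mem_cons_self a t)
    have ht := ih (fun b hb => h b (Multiset.mem_cons_of_mem hb))
    simp only [Multiset.prod_cons, Multiset.card_cons, pow_succ]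
    calc m ^ Multiset.card t * m ≤ t.prod * a :=
          mul_le_mul ht hma hm ((pow_nonneg hm _).trans ht)
      _ = a * t.prod := mul_comm _ _

theorem aux_approx (p : ℕ) [Fact p.Prime] (Cp : Type) [NormedField Cp] [IsAlgClosed Cp]
    [CharZero Cp] [Algebra ℚ_[p] Cp] (hQp : Isometry (algebraMap ℚ_[p] Cp))
    (x : Cp) (hx : IsAlgebraic ℚ_[p] x) {r : ℝ} (hr : 0 < r) :
    ∃ w : Cp, IsAlgebraic ℚ w ∧ dist x w < r := by
  set φ : ℚ_[p] →+* Cp := algebraMap ℚ_[p] Cp with hφdef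
  have hφ : ∀ t : ℚ_[p], ‖φ t‖ = ‖t‖ := fun t => hQp.norm_map_of_map_zero (map_zero φ) t
  have hint : IsIntegral ℚ_[p] x := hx.isIntegral
  set f : ℚ_[p][X] := minpoly ℚ_[p] x with hfdef
  have hfm : f.Monic := minpoly.monic hint
  set n : ℕ := f.natDegree with hndef
  have hn : 0 < n := minpoly.natDegree_pos hint
  set B : ℝ := ∑ i ∈ Finset.range n, ‖x‖ ^ i with hBdef
  have hB1 : (1 : ℝ) ≤ B := by
    have := Finset.single_le_sum (f := fun i => ‖x‖ ^ i)
      (fun i _ => pow_nonneg (norm_nonneg x) i) (Finset.mem_range.2 hn)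
    simpa using this
  have hBpos : (0 : ℝ) < B := lt_of_lt_of_le one_pos hB1
  set m : ℝ := min r 1 with hmdef
  have hm : 0 < m := lt_min hr one_pos
  set δ : ℝ := m ^ n / (B + 1) with hδdef
  have hδ : 0 < δ := div_pos (pow_pos hm n) (by linarith)
  -- rational approximations of coefficients
  have hq : ∀ i : ℕ, ∃ q : ℚ, ‖f.coeff i - (q : ℚ_[p])‖ < δ := fun i =>
    Padic.rat_dense p (f.coeff i) hδ
  choose q hqs using hq
  -- the rational polynomial
  set g : ℚ[X] := X ^ n + ∑ i ∈ Finset.range n, C (q i) * X ^ i with hgdef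
  have hdeg : (∑ i ∈ Finset.range n, C (q i) * X ^ i : ℚ[X]).degree < (n : ℕ) := by
    apply lt_of_le_of_lt (Polynomial.degree_sum_le _ _)
    rw [Finset.sup_lt_iff (by exact_mod_cast WithBot.bot_lt_coe n)]
    intro i hi
    exact lt_of_le_of_lt (degree_C_mul_X_pow_le _ _)
      (by exact_mod_cast Finset.mem_range.1 hi)
  have hgm : g.Monic := monic_X_pow_add hdeg
  have hgdeg : g.natDegree = n := by
    have hdg : g.degree = (n : ℕ) := by
      rw [hgdef, degree_add_eq_left_of_degree_lt (by rwa [degree_X_pow]), degree_X_pow]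
    exact natDegree_eq_of_degree_eq_some hdg
  set G : Cp[X] := g.map (algebraMap ℚ Cp) with hGdef
  have hGm : G.Monic := hgm.map _
  have hGdeg : G.natDegree = n := by rw [hGdef, hgm.natDegree_map]; exact hgdeg
  -- key evaluation estimate
  have hcast : ∀ a : ℚ, algebraMap ℚ Cp a = φ ((a : ℚ_[p])) := by
    intro a
    rw [eq_ratCast (algebraMap ℚ Cp), map_ratCast φ]
  have hevalG : eval x G = ∑ i ∈ Finset.range n, φ ((q i : ℚ_[p]) - f.coeff i) * x ^ i := by
    have hf_eval : (0 : Cp) = x ^ n + ∑ i ∈ Finset.range n, φ (f.coeff i) * x ^ i := by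
      have := minpoly.aeval ℚ_[p] x
      rw [← hfdef, hfm.as_sum] at this
      rw [← this]
      simp only [map_add, map_pow, aeval_X, map_sum, map_mul, aeval_C]
      rfl
    have hG_eval : eval x G = x ^ n + ∑ i ∈ Finset.range n, φ ((q i : ℚ_[p])) * x ^ i := by
      rw [hGdef, hgdef]
      simp only [Polynomial.map_add, Polynomial.map_pow, Polynomial.map_X,
        Polynomial.map_sum, Polynomial.map_mul, Polynomial.map_C, eval_add, eval_pow,
        eval_X, eval_finset_sum, eval_mul, eval_C, hcast]
    calc eval x G = eval x G - 0 := by ring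
      _ = (x ^ n + ∑ i ∈ Finset.range n, φ ((q i : ℚ_[p])) * x ^ i)
          - (x ^ n + ∑ i ∈ Finset.range n, φ (f.coeff i) * x ^ i) := by rw [hG_eval, ← hf_eval]
      _ = ∑ i ∈ Finset.range n, (φ ((q i : ℚ_[p])) - φ (f.coeff i)) * x ^ i := by
          rw [add_sub_add_left_eq_sub, ← Finset.sum_sub_distrib]
          exact Finset.sum_congr rfl fun i _ => (sub_mul _ _ _).symm
      _ = ∑ i ∈ Finset.range n, φ ((q i : ℚ_[p]) - f.coeff i) * x ^ i := by
          simp only [map_sub]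
  have hnorm : ‖eval x G‖ < m ^ n := by
    calc ‖eval x G‖ ≤ ∑ i ∈ Finset.range n, ‖φ ((q i : ℚ_[p]) - f.coeff i) * x ^ i‖ := by
          rw [hevalG]; exact norm_sum_le _ _
      _ ≤ ∑ i ∈ Finset.range n, δ * ‖x‖ ^ i := by
          apply Finset.sum_le_sum
          intro i _
          rw [norm_mul, hφ, norm_pow]
          have : ‖(q i : ℚ_[p]) - f.coeff i‖ < δ := by
            rw [norm_sub_rev]; exact hqs i
          exact mul_le_mul_of_nonneg_right this.le (pow_nonneg (norm_nonneg x) i)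
      _ = δ * B := by rw [hBdef, Finset.mul_sum]
      _ < m ^ n := by
          rw [hδdef, div_mul_eq_mul_div, div_lt_iff₀ (by linarith)]
          have := pow_pos hm n
          nlinarith
  -- roots of G
  have hG0 : G ≠ 0 := hGm.ne_zero
  have hsplit : Splits G := IsAlgClosed.splits G
  have hcard : Multiset.card G.roots = n := by
    rw [← hGdeg]; exact splits_iff_card_roots.1 hsplit
  have hGfact : eval x G = ((G.roots).map (fun a => x - a)).prod := by
    conv_lhs => rw [hsplit.eq_prod_roots_of_monic hGm]
    rw [eval_multiset_prod, Multiset.map_map]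
    exact congrArg Multiset.prod (Multiset.map_congr rfl (by intro a _; simp))
  have hroot : ∃ a ∈ G.roots, ‖x - a‖ < m := by
    by_contra hcon
    push_neg at hcon
    have hprodnorm : ‖eval x G‖ = ((G.roots).map (fun a => ‖x - a‖)).prod := by
      rw [hGfact]
      rw [show ((G.roots).map (fun a => ‖x - a‖)) = ((G.roots).map (fun a => x - a)).map norm by
        rw [Multiset.map_map]; rfl]
      exact map_multiset_prod (normHom.toMonoidHom : Cp →* ℝ) _
    have hge : m ^ n ≤ ‖eval x G‖ := by
      rw [hprodnorm]
      have := aux_multiset_pow_le (s := (G.roots).map (fun a => ‖x - a‖)) (m := m) hm.le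
        (by intro b hb; obtain ⟨a, ha, rfl⟩ := Multiset.mem_map.1 hb; exact hcon a ha)
      rwa [Multiset.card_map, hcard] at this
    exact absurd hnorm (not_lt.2 hge)
  obtain ⟨a, ha, hlt⟩ := hroot
  refine ⟨a, ⟨g, hgm.ne_zero, ?_⟩, ?_⟩
  · rw [aeval_def, ← eval_map, ← hGdef]
    exact (mem_roots hG0).1 ha
  · rw [dist_eq_norm]
    exact lt_of_lt_of_le hlt (min_le_left _ _)


theorem aux_sep (p : ℕ) [Fact p.Prime] (Cp : Type) [NormedField Cp] [IsAlgClosed Cp]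
    [Algebra ℚ_[p] Cp] (hQp : Isometry (algebraMap ℚ_[p] Cp))
    (hdense : Dense {x : Cp | IsAlgebraic ℚ_[p] x}) :
    TopologicalSpace.SeparableSpace Cp := by
  haveI : CharZero Cp := charZero_of_injective_algebraMap (algebraMap ℚ_[p] Cp).injective
  haveI : NoZeroSMulDivisors ℚ Cp :=
    inferInstance
  refine ⟨⟨{x : Cp | IsAlgebraic ℚ x}, Algebraic.countable ℚ Cp, ?_⟩⟩
  rw [Metric.dense_iff]
  intro z r hr
  obtain ⟨x, hx, hdist⟩ := hdense.exists_dist_lt z (half_pos hr)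
  obtain ⟨w, hw, hxw⟩ := aux_approx p Cp hQp x hx (half_pos hr)
  refine ⟨w, Metric.mem_ball.2 ?_, hw⟩
  have h1 := dist_triangle w x z
  have h2 : dist w x = dist x w := dist_comm _ _
  have h3 : dist x z = dist z x := dist_comm _ _
  linarith


theorem aux_closed (p : ℕ) [Fact p.Prime] (Cp : Type) [NormedField Cp]
    [Algebra ℚ_[p] Cp] (hQp : Isometry (algebraMap ℚ_[p] Cp)) (n : ℕ) :
    IsClosed {x : Cp | ∃ c : Fin (n+1) → ℚ_[p], ‖c‖ = 1 ∧
      ∑ i, algebraMap ℚ_[p] Cp (c i) * x ^ (i : ℕ) = 0} := by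
  set K := Metric.sphere (0 : Fin (n+1) → ℚ_[p]) 1 with hKdef
  have hK : IsCompact K := isCompact_sphere _ _
  haveI : CompactSpace K := isCompact_iff_compactSpace.1 hK
  set F : K × Cp → Cp := fun q =>
    ∑ i, algebraMap ℚ_[p] Cp ((q.1 : Fin (n+1) → ℚ_[p]) i) * q.2 ^ (i : ℕ) with hFdef
  have hF : Continuous F := by
    apply continuous_finset_sum
    intro i _
    exact (hQp.continuous.comp ((continuous_apply i).comp
      (continuous_subtype_val.comp continuous_fst))).mul (continuous_snd.pow _)
  have hZ : IsClosed (F ⁻¹' {0}) := isClosed_singleton.preimage hF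
  have him : {x : Cp | ∃ c : Fin (n+1) → ℚ_[p], ‖c‖ = 1 ∧
      ∑ i, algebraMap ℚ_[p] Cp (c i) * x ^ (i : ℕ) = 0} = Prod.snd '' (F ⁻¹' {0}) := by
    ext x
    constructor
    · rintro ⟨c, hc1, hc2⟩
      exact ⟨⟨⟨c, by simpa [hKdef, mem_sphere_zero_iff_norm] using hc1⟩, x⟩, hc2, rfl⟩
    · rintro ⟨⟨⟨c, hcK⟩, y⟩, hy, rfl⟩
      exact ⟨c, by simpa [hKdef, mem_sphere_zero_iff_norm] using hcK, hy⟩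
  rw [him]
  exact isClosedMap_snd_of_compactSpace _ hZ

theorem aux_union (p : ℕ) [Fact p.Prime] (Cp : Type) [NormedField Cp] [Algebra ℚ_[p] Cp] :
    {x : Cp | IsAlgebraic ℚ_[p] x} =
      ⋃ n : ℕ, {x : Cp | ∃ c : Fin (n+1) → ℚ_[p], ‖c‖ = 1 ∧
        ∑ i, algebraMap ℚ_[p] Cp (c i) * x ^ (i : ℕ) = 0} := by
  ext x
  simp only [mem_iUnion, mem_setOf_eq]
  constructor
  · rintro ⟨f, hf0, hfx⟩
    refine ⟨f.natDegree, ?_⟩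
    set n := f.natDegree with hndef
    set c0 : Fin (n+1) → ℚ_[p] := fun i => f.coeff i with hc0def
    have hsum0 : ∑ i : Fin (n+1), algebraMap ℚ_[p] Cp (c0 i) * x ^ (i : ℕ) = 0 := by
      rw [Fin.sum_univ_eq_sum_range (fun i => algebraMap ℚ_[p] Cp (f.coeff i) * x ^ i) (n+1)]
      rw [aeval_eq_sum_range] at hfx
      rw [← hfx]
      exact Finset.sum_congr rfl fun i _ => (Algebra.smul_def _ _).symm
    have hc0ne : c0 ⟨n, n.lt_succ_self⟩ ≠ 0 := by
      have h := leadingCoeff_ne_zero.2 hf0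
      rw [Polynomial.leadingCoeff] at h
      exact h
    obtain ⟨j, _, hj⟩ := Finset.exists_max_image Finset.univ (fun i => ‖c0 i‖)
      ⟨⟨n, n.lt_succ_self⟩, Finset.mem_univ _⟩
    have hj0 : c0 j ≠ 0 := by
      intro h
      have := hj ⟨n, n.lt_succ_self⟩ (Finset.mem_univ _)
      rw [h, norm_zero] at this
      exact hc0ne (norm_le_zero_iff.1 this)
    set c : Fin (n+1) → ℚ_[p] := (c0 j)⁻¹ • c0 with hcdef
    have hnorm : ‖c‖ = 1 := by
      apply le_antisymm
      · apply (pi_norm_le_iff_of_nonneg zero_le_one).2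
        intro i
        rw [hcdef, Pi.smul_apply, norm_smul, norm_inv, ← div_eq_inv_mul]
        exact div_le_one_of_le₀ (hj i (Finset.mem_univ _)) (norm_nonneg _)
      · calc (1 : ℝ) = ‖c j‖ := by
              rw [hcdef, Pi.smul_apply, norm_smul, norm_inv,
                inv_mul_cancel₀ (norm_ne_zero_iff.2 hj0)]
          _ ≤ ‖c‖ := norm_le_pi_norm c j
    refine ⟨c, hnorm, ?_⟩
    have hfac : ∑ i : Fin (n+1), algebraMap ℚ_[p] Cp (c i) * x ^ (i : ℕ)
        = algebraMap ℚ_[p] Cp (c0 j)⁻¹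
          * ∑ i : Fin (n+1), algebraMap ℚ_[p] Cp (c0 i) * x ^ (i : ℕ) := by
      rw [Finset.mul_sum]
      refine Finset.sum_congr rfl fun i _ => ?_
      rw [hcdef, Pi.smul_apply, smul_eq_mul, map_mul, mul_assoc]
    rw [hfac, hsum0, mul_zero]
  · rintro ⟨n, c, hc1, hc2⟩
    have hcne : ∃ i, c i ≠ 0 := by
      by_contra h
      push_neg at h
      have : c = 0 := funext fun i => h i
      rw [this, norm_zero] at hc1
      exact one_ne_zero hc1.symm
    obtain ⟨i₀, hi₀⟩ := hcne
    set f : ℚ_[p][X] := ∑ i : Fin (n+1), C (c i) * X ^ (i : ℕ) with hfdef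
    have hcoeff : f.coeff (i₀ : ℕ) = c i₀ := by
      rw [hfdef, finset_sum_coeff]
      rw [Finset.sum_eq_single i₀]
      · simp [coeff_C_mul, coeff_X_pow]
      · intro b _ hb
        have hne : ((i₀ : ℕ) : ℕ) ≠ (b : ℕ) := fun h => hb (Fin.ext h.symm)
        simp [coeff_C_mul, coeff_X_pow, hne]
      · intro h
        exact absurd (Finset.mem_univ i₀) h
    refine ⟨f, ?_, ?_⟩
    · intro h
      rw [h, coeff_zero] at hcoeff
      exact hi₀ hcoeff.symm
    · rw [hfdef, map_sum]
      rw [← hc2]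
      refine Finset.sum_congr rfl fun i _ => ?_
      rw [map_mul, aeval_C, map_pow, aeval_X]


theorem aux_gdelta_polish {α : Type*} [TopologicalSpace α] [PolishSpace α]
    (U : ℕ → Set α) (hU : ∀ n, IsOpen (U n)) : PolishSpace ↥(⋂ n, U n) := by
  letI := TopologicalSpace.upgradeIsCompletelyMetrizable α
  haveI : ∀ n, PolishSpace (U n) := fun n => (hU n).polishSpace
  set s := ⋂ n, U n with hs
  have hsub : ∀ (x : s) (n : ℕ), (x : α) ∈ U n := fun x n => Set.mem_iInter.1 x.2 n
  set f : s → ∀ n, U n := fun x n => ⟨(x : α), hsub x n⟩ with hf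
  have hcont : Continuous f :=
    continuous_pi fun n => Continuous.subtype_mk continuous_subtype_val _
  have hinj : Function.Injective f := by
    intro a b h
    exact Subtype.ext (congrArg Subtype.val (congrFun h 0) : ((f a 0 : α) = (f b 0 : α)))
  set g : (∀ n, U n) → α := fun y => (y 0 : α) with hg
  have hgcont : Continuous g := continuous_subtype_val.comp (continuous_apply 0)
  have hcomp : g ∘ f = Subtype.val := rfl
  have hind : Topology.IsInducing f :=
    Topology.IsInducing.of_comp hcont hgcont (hcomp ▸ Topology.IsInducing.subtypeVal)
  have hrange : Set.range f = {y : ∀ n, U n | ∀ n, (y n : α) = (y 0 : α)} := by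
    ext y
    constructor
    · rintro ⟨x, rfl⟩
      intro n
      rfl
    · intro hy
      have hmem : (y 0 : α) ∈ s := Set.mem_iInter.2 fun n => hy n ▸ (y n).2
      refine ⟨⟨(y 0 : α), hmem⟩, ?_⟩
      funext n
      exact Subtype.ext (hy n).symm
  have hclosed : IsClosed (Set.range f) := by
    rw [hrange]
    have : {y : ∀ n, U n | ∀ n, (y n : α) = (y 0 : α)}
        = ⋂ n, {y : ∀ n, U n | (y n : α) = (y 0 : α)} := by
      ext y; simp [Set.mem_iInter]
    rw [this]
    refine isClosed_iInter fun n => isClosed_eq ?_ ?_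
    · exact continuous_subtype_val.comp (continuous_apply n)
    · exact continuous_subtype_val.comp (continuous_apply 0)
  have hemb : Topology.IsClosedEmbedding f :=
    ⟨⟨hind, hinj⟩, hclosed⟩
  exact hemb.polishSpace


/-!
STATEMENT 2. The transcendent `p`-adic upper half plane
`Ω_tr = {x ∈ ℂ_p : x transcendental over ℚ_p}`, with the subspace topology inherited
from `ℂ_p`, is a Polish space (separable and completely metrizable).

`ℂ_p` is characterised by its defining properties: `Cp` is a complete, algebraically
closed, ultrametric normed field with an isometric embedding of `ℚ_p` and a dense copy
of an algebraic closure `Qbar` of `ℚ_p`.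
-/
theorem transcendent_upper_half_plane_polish
    (p : ℕ) [Fact p.Prime]
    (Qbar : Type) [Field Qbar] [Algebra ℚ_[p] Qbar] [IsAlgClosure ℚ_[p] Qbar]
    (Cp : Type) [NormedField Cp] [CompleteSpace Cp] [IsUltrametricDist Cp] [IsAlgClosed Cp]
    [Algebra ℚ_[p] Cp] [Algebra Qbar Cp] [IsScalarTower ℚ_[p] Qbar Cp]
    (hQp : Isometry (algebraMap ℚ_[p] Cp))
    (hdense : DenseRange (algebraMap Qbar Cp)) :
    PolishSpace {x : Cp // Transcendental ℚ_[p] x} := by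
  -- the algebraic points are dense
  have halgdense : Dense {x : Cp | IsAlgebraic ℚ_[p] x} := by
    apply hdense.mono
    rintro _ ⟨y, rfl⟩
    have halg : Algebra.IsAlgebraic ℚ_[p] Qbar := IsAlgClosure.isAlgebraic
    exact (halg.isAlgebraic y).algHom (IsScalarTower.toAlgHom ℚ_[p] Qbar Cp)
  -- Cp is a Polish space
  haveI : TopologicalSpace.SeparableSpace Cp := aux_sep p Cp hQp halgdense
  haveI : PolishSpace Cp := inferInstance
  -- the transcendental points form a Gδ set
  set A : ℕ → Set Cp := fun n => {x : Cp | ∃ c : Fin (n+1) → ℚ_[p], ‖c‖ = 1 ∧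
    ∑ i, algebraMap ℚ_[p] Cp (c i) * x ^ (i : ℕ) = 0} with hAdef
  have hset : {x : Cp | Transcendental ℚ_[p] x} = ⋂ n, (A n)ᶜ := by
    rw [← Set.compl_iUnion]
    have h1 : {x : Cp | Transcendental ℚ_[p] x} = {x : Cp | IsAlgebraic ℚ_[p] x}ᶜ := rfl
    rw [h1, aux_union p Cp]
  have hpolish : PolishSpace ↥(⋂ n, (A n)ᶜ) :=
    aux_gdelta_polish _ (fun n => (aux_closed p Cp hQp n).isOpen_compl)
  show PolishSpace ↥{x : Cp | Transcendental ℚ_[p] x}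
  rw [hset]
  exact hpolish
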